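/- Optimality witness in the Gaussian case: for d ≥ 2 and γ the standard Gaussian on R^d, the vector field u(x) = (1 − x_2^2, x_1 x_2, 0, …, 0) satisfies ⟨u⟩ = 0, P(u) = 0, ⟨D^a u⟩ = 0, ∫|u|^2 dγ = 3, ∫|D^s u|^2 dγ = 3/2, ∫|D^a u|^2 dγ = 9/2, and ∫|Du|^2 dγ = 6. In particular, ∫|u|^2 dγ = 2 ∫|D^s u|^2 dγ and ∫|Du|^2 dγ = 4 ∫|D^s u|^2 dγ. -/

import Mathlib

open MeasureTheory Real

noncomputable section

/-- Partial derivative in direction `i`. -/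
def pd {d : ℕ} (i : Fin d) (f : (Fin d → ℝ) → ℝ) (x : Fin d → ℝ) : ℝ :=
  fderiv ℝ f x (Pi.single i 1)

/-- Jacobian matrix `(∂_j u_i)`. -/
def jac {d : ℕ} (u : (Fin d → ℝ) → (Fin d → ℝ)) (x : Fin d → ℝ) (i j : Fin d) : ℝ :=
  pd j (fun y => u y i) x

/-- Symmetric part of the Jacobian. -/
def symJ {d : ℕ} (u : (Fin d → ℝ) → (Fin d → ℝ)) (x : Fin d → ℝ) (i j : Fin d) : ℝ :=
  (jac u x i j + jac u x j i) / 2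

/-- Antisymmetric part of the Jacobian. -/
def asymJ {d : ℕ} (u : (Fin d → ℝ) → (Fin d → ℝ)) (x : Fin d → ℝ) (i j : Fin d) : ℝ :=
  (jac u x i j - jac u x j i) / 2

/-- Squared Frobenius norm. -/
def frob {d : ℕ} (A : Fin d → Fin d → ℝ) : ℝ := ∑ i, ∑ j, (A i j) ^ 2

/-- Divergence of a vector field. -/
def diver {d : ℕ} (u : (Fin d → ℝ) → (Fin d → ℝ)) (x : Fin d → ℝ) : ℝ := ∑ i, jac u x i i

/-- Gradient of a scalar function. -/
def grad {d : ℕ} (φ : (Fin d → ℝ) → ℝ) (x : Fin d → ℝ) (i : Fin d) : ℝ := pd i φ x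

/-- Hessian matrix of a scalar function. -/
def hess {d : ℕ} (φ : (Fin d → ℝ) → ℝ) (x : Fin d → ℝ) (i j : Fin d) : ℝ :=
  pd j (fun y => pd i φ y) x

/-- Density of the standard Gaussian measure on `ℝ^d`. -/
def gw (d : ℕ) (x : Fin d → ℝ) : ℝ :=
  (2 * π) ^ (-(d : ℝ) / 2) * Real.exp (-(∑ i, (x i) ^ 2) / 2)

namespace S10

open Filter


def g1 : ℝ → ℝ := fun t => (2 * π) ^ (-(1:ℝ) / 2) * Real.exp (-t ^ 2 / 2)

def G (n : ℕ) : ℝ := ∫ t : ℝ, t ^ n * Real.exp (-t ^ 2 / 2)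

def M (n : ℕ) : ℝ := ∫ t : ℝ, t ^ n * g1 t

lemma integrable_pow_gauss (n : ℕ) :
    Integrable (fun t : ℝ => t ^ n * Real.exp (-t ^ 2 / 2)) := by
  have h := integrable_rpow_mul_exp_neg_mul_sq (b := (1:ℝ)/2) (by norm_num)
    (s := (n:ℝ)) (by have : (0:ℝ) ≤ n := Nat.cast_nonneg n; linarith)
  refine h.congr (Eventually.of_forall fun t => ?_)
  simp only [Real.rpow_natCast]
  congr 1
  ring

lemma tendsto_top (n : ℕ) :
    Tendsto (fun t : ℝ => t ^ n * Real.exp (-t ^ 2 / 2)) atTop (nhds 0) := by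
  have h := (rpow_mul_exp_neg_mul_sq_isLittleO_exp_neg (b := (1:ℝ)/2) (by norm_num)
    (n : ℝ)).isBigO.trans_tendsto ?_
  · refine h.congr' (Eventually.of_forall fun t => ?_)
    simp only [Real.rpow_natCast]
    congr 1
    ring
  · have h2 : Tendsto (fun x : ℝ => -(1/2) * x) atTop atBot := by
      apply Filter.Tendsto.const_mul_atTop_of_neg (by norm_num) tendsto_id
    exact Real.tendsto_exp_atBot.comp h2

lemma tendsto_bot (n : ℕ) :
    Tendsto (fun t : ℝ => t ^ n * Real.exp (-t ^ 2 / 2)) atBot (nhds 0) := by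
  have h1 : Tendsto (fun t : ℝ => ((-1:ℝ)) ^ n * (t ^ n * Real.exp (-t ^ 2 / 2))) atTop (nhds 0) := by
    simpa using (tendsto_top n).const_mul ((-1:ℝ) ^ n)
  have h2 := h1.comp tendsto_neg_atBot_atTop
  refine h2.congr (fun t => ?_)
  show (-1:ℝ) ^ n * ((-t) ^ n * Real.exp (-(-t) ^ 2 / 2)) = t ^ n * Real.exp (-t ^ 2 / 2)
  rw [neg_sq, ← mul_assoc, ← mul_pow]
  norm_num


lemma hasDerivAt_gauss (x : ℝ) :
    HasDerivAt (fun t : ℝ => Real.exp (-t ^ 2 / 2)) (-x * Real.exp (-x ^ 2 / 2)) x := by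
  have h1 : HasDerivAt (fun t : ℝ => -t ^ 2 / 2) (-x) x := by
    have h : HasDerivAt (fun t : ℝ => -t ^ 2 / 2) (-(((2:ℕ):ℝ) * x ^ (2 - 1)) / 2) x :=
      ((hasDerivAt_pow 2 x).neg).div_const 2
    convert h using 1
    push_cast
    ring
  have := h1.exp
  convert this using 1
  ring

lemma G_zero : G 0 = Real.sqrt (2 * π) := by
  rw [G]
  simp only [pow_zero, one_mul]
  rw [show (fun t : ℝ => Real.exp (-t ^ 2 / 2)) = fun t : ℝ => Real.exp (-(1/2) * t ^ 2) from
    funext fun t => by congr 1; ring]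
  rw [integral_gaussian]
  congr 1
  ring

lemma G_one : G 1 = 0 := by
  have h0 := integral_of_hasDerivAt_of_tendsto (f := fun t : ℝ => Real.exp (-t ^ 2 / 2))
    (f' := fun x : ℝ => -x * Real.exp (-x ^ 2 / 2)) hasDerivAt_gauss
    (by
      refine ((integrable_pow_gauss 1).neg).congr (Eventually.of_forall fun t => ?_)
      simp)
    (by simpa only [pow_zero, one_mul] using tendsto_bot 0)
    (by simpa only [pow_zero, one_mul] using tendsto_top 0)
  have : ∫ x : ℝ, -x * Real.exp (-x ^ 2 / 2) = -G 1 := by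
    rw [G, ← integral_neg]
    congr 1 with x
    simp
  rw [this] at h0
  simp only [sub_zero] at h0
  linarith [h0]

lemma G_rec (n : ℕ) : G (n + 2) = (n + 1) * G n := by
  have hderiv : ∀ x : ℝ, HasDerivAt (fun t : ℝ => t ^ (n+1) * Real.exp (-t ^ 2 / 2))
      (((n:ℝ)+1) * x ^ n * Real.exp (-x ^ 2 / 2) - x ^ (n+2) * Real.exp (-x ^ 2 / 2)) x := by
    intro x
    have h : HasDerivAt (fun t : ℝ => t ^ (n+1) * Real.exp (-t ^ 2 / 2))
        (((n+1:ℕ):ℝ) * x ^ n * Real.exp (-x ^ 2 / 2) + x ^ (n+1) * (-x * Real.exp (-x ^ 2 / 2))) x :=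
      (hasDerivAt_pow (n+1) x).mul (hasDerivAt_gauss x)
    convert h using 1
    push_cast
    ring
  have hint : Integrable (fun x : ℝ =>
      ((n:ℝ)+1) * x ^ n * Real.exp (-x ^ 2 / 2) - x ^ (n+2) * Real.exp (-x ^ 2 / 2)) := by
    refine Integrable.sub ?_ (integrable_pow_gauss (n+2))
    simpa [mul_assoc] using (integrable_pow_gauss n).const_mul ((n:ℝ)+1)
  have h0 := integral_of_hasDerivAt_of_tendsto hderiv hint (tendsto_bot (n+1)) (tendsto_top (n+1))
  rw [integral_sub (by simpa [mul_assoc] using (integrable_pow_gauss n).const_mul ((n:ℝ)+1))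
    (integrable_pow_gauss (n+2))] at h0
  have e1 : ∫ x : ℝ, ((n:ℝ)+1) * x ^ n * Real.exp (-x ^ 2 / 2) = ((n:ℝ)+1) * G n := by
    rw [G, ← integral_const_mul]
    congr 1 with x
    ring
  rw [e1] at h0
  rw [show G (n+2) = ∫ x : ℝ, x ^ (n+2) * Real.exp (-x ^ 2 / 2) from rfl]
  linarith [h0]

lemma c_mul_sqrt : (2 * π) ^ (-(1:ℝ) / 2) * Real.sqrt (2 * π) = 1 := by
  rw [Real.sqrt_eq_rpow, ← Real.rpow_add (by positivity)]
  norm_num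

lemma M_eq (n : ℕ) : M n = (2 * π) ^ (-(1:ℝ) / 2) * G n := by
  rw [M, G, ← integral_const_mul]
  congr 1 with t
  rw [g1]
  ring

lemma M_zero : M 0 = 1 := by rw [M_eq, G_zero, c_mul_sqrt]
lemma M_one : M 1 = 0 := by rw [M_eq, G_one, mul_zero]
lemma M_two : M 2 = 1 := by
  rw [M_eq, show (2:ℕ) = 0 + 2 from rfl, G_rec, G_zero]
  push_cast
  rw [show ((0:ℝ)+1) * √(2*π) = √(2*π) by ring]
  exact c_mul_sqrt
lemma M_three : M 3 = 0 := by
  rw [M_eq, show (3:ℕ) = 1 + 2 from rfl, G_rec, G_one]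
  simp
lemma M_four : M 4 = 3 := by
  rw [M_eq, show (4:ℕ) = 2 + 2 from rfl, G_rec, show G 2 = G (0 + 2) from rfl, G_rec, G_zero]
  push_cast
  rw [show ((2:ℝ)+1) * ((0+1) * √(2*π)) = 3 * √(2*π) by ring, ← mul_assoc, mul_comm ((2*π) ^ (-(1:ℝ)/2)) 3, mul_assoc, c_mul_sqrt, mul_one]



lemma gw_prod (d : ℕ) (x : Fin d → ℝ) : gw d x = ∏ i, g1 (x i) := by
  simp only [gw, g1]
  rw [Finset.prod_mul_distrib, Finset.prod_const, Finset.card_univ, Fintype.card_fin,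
    ← Real.exp_sum]
  congr 1
  · rw [← Real.rpow_natCast ((2*π) ^ (-(1:ℝ)/2)) d, ← Real.rpow_mul (by positivity)]
    congr 1
    ring
  · rw [← Finset.sum_div, ← Finset.sum_neg_distrib]

lemma prod_two {d : ℕ} {i0 i1 : Fin d} (h : i0 ≠ i1) (A B : ℝ) (F : Fin d → ℝ)
    (hF : ∀ i, F i = if i = i0 then A else if i = i1 then B else 1) :
    ∏ i, F i = A * B := by
  have key : ∀ i, F i = (if i = i0 then A else 1) * (if i = i1 then B else 1) := by
    intro i
    rcases eq_or_ne i i0 with h0 | h0 <;> rcases eq_or_ne i i1 with h1 | h1 <;>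
      simp_all [hF i]
  rw [Finset.prod_congr rfl fun i _ => key i, Finset.prod_mul_distrib,
    Finset.prod_ite_eq' Finset.univ i0 (fun _ => A),
    Finset.prod_ite_eq' Finset.univ i1 (fun _ => B)]
  simp

lemma sum_two {d : ℕ} {i0 i1 : Fin d} (h : i0 ≠ i1) (A B : ℝ) (F : Fin d → ℝ)
    (hF : ∀ i, F i = if i = i0 then A else if i = i1 then B else 0) :
    ∑ i, F i = A + B := by
  have key : ∀ i, F i = (if i = i0 then A else 0) + (if i = i1 then B else 0) := by
    intro i
    rcases eq_or_ne i i0 with h0 | h0 <;> rcases eq_or_ne i i1 with h1 | h1 <;>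
      simp_all [hF i]
  rw [Finset.sum_congr rfl fun i _ => key i, Finset.sum_add_distrib,
    Finset.sum_ite_eq' Finset.univ i0 (fun _ => A),
    Finset.sum_ite_eq' Finset.univ i1 (fun _ => B)]
  simp

lemma sum_block {d : ℕ} {i0 i1 : Fin d} (h : i0 ≠ i1) (a b c e : ℝ) (F : Fin d → Fin d → ℝ)
    (hF : ∀ i j, F i j = if i = i0 then (if j = i0 then a else if j = i1 then b else 0)
      else if i = i1 then (if j = i0 then c else if j = i1 then e else 0) else 0) :
    ∑ i, ∑ j, F i j = (a + b) + (c + e) := by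
  refine sum_two h _ _ _ fun i => ?_
  rcases eq_or_ne i i0 with h0 | h0
  · subst h0
    simp only [if_pos rfl]
    exact sum_two h a b _ fun j => by rw [hF]; simp
  · rcases eq_or_ne i i1 with h1 | h1
    · subst h1
      rw [if_neg h0, if_pos rfl]
      exact sum_two h c e _ fun j => by rw [hF]; simp [h0]
    · rw [if_neg h0, if_neg h1]
      exact Finset.sum_eq_zero fun j _ => by rw [hF]; simp [h0, h1]

lemma integrable_g1pow (n : ℕ) : Integrable (fun t : ℝ => t ^ n * g1 t) := by
  have := (integrable_pow_gauss n).const_mul ((2*π) ^ (-(1:ℝ)/2))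
  refine this.congr (Eventually.of_forall fun t => ?_)
  simp only [g1]
  ring

lemma integrable_P (d : ℕ) (e : Fin d → ℕ) :
    Integrable (fun x : Fin d → ℝ => (∏ i, (x i) ^ (e i)) * gw d x) := by
  have h := MeasureTheory.Integrable.fintype_prod (f := fun (i : Fin d) (t : ℝ) => t ^ (e i) * g1 t)
    (fun i => integrable_g1pow (e i))
  refine h.congr (Eventually.of_forall fun x => ?_)
  show (∏ i, (x i) ^ (e i) * g1 (x i)) = (∏ i, (x i) ^ (e i)) * gw d x
  rw [Finset.prod_mul_distrib, gw_prod]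

lemma integral_P (d : ℕ) (e : Fin d → ℕ) :
    ∫ x : Fin d → ℝ, (∏ i, (x i) ^ (e i)) * gw d x = ∏ i, M (e i) := by
  rw [show (fun x : Fin d → ℝ => (∏ i, (x i) ^ (e i)) * gw d x)
      = fun x => ∏ i, (x i) ^ (e i) * g1 (x i) from funext fun x => by
    rw [Finset.prod_mul_distrib, gw_prod]]
  rw [volume_pi, MeasureTheory.integral_fintype_prod_eq_prod
    (f := fun (i : Fin d) (t : ℝ) => t ^ (e i) * g1 t)]
  rfl

def e2 {d : ℕ} (i0 i1 : Fin d) (a b : ℕ) : Fin d → ℕ :=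
  fun i => if i = i0 then a else if i = i1 then b else 0

lemma mono2 {d : ℕ} {i0 i1 : Fin d} (h : i0 ≠ i1) (a b : ℕ) (x : Fin d → ℝ) :
    (∏ i, (x i) ^ (e2 i0 i1 a b i)) = (x i0) ^ a * (x i1) ^ b := by
  refine prod_two h _ _ _ fun i => ?_
  rcases eq_or_ne i i0 with h0 | h0 <;> rcases eq_or_ne i i1 with h1 | h1 <;>
    simp_all [e2]

lemma prodM2 {d : ℕ} {i0 i1 : Fin d} (h : i0 ≠ i1) (a b : ℕ) :
    (∏ i, M (e2 i0 i1 a b i)) = M a * M b := by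
  refine prod_two h _ _ _ fun i => ?_
  rcases eq_or_ne i i0 with h0 | h0 <;> rcases eq_or_ne i i1 with h1 | h1 <;>
    simp_all [e2, M_zero]

lemma integrable_mono2 {d : ℕ} {i0 i1 : Fin d} (h : i0 ≠ i1) (a b : ℕ) :
    Integrable (fun x : Fin d → ℝ => (x i0) ^ a * (x i1) ^ b * gw d x) :=
  (integrable_P d (e2 i0 i1 a b)).congr (Eventually.of_forall fun x => by
    show (∏ i, (x i) ^ (e2 i0 i1 a b i)) * gw d x = (x i0) ^ a * (x i1) ^ b * gw d x
    rw [mono2 h])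

lemma integral_mono2 {d : ℕ} {i0 i1 : Fin d} (h : i0 ≠ i1) (a b : ℕ) :
    ∫ x : Fin d → ℝ, (x i0) ^ a * (x i1) ^ b * gw d x = M a * M b := by
  rw [show (fun x : Fin d → ℝ => (x i0) ^ a * (x i1) ^ b * gw d x)
      = fun x => (∏ i, (x i) ^ (e2 i0 i1 a b i)) * gw d x from funext fun x => by
    show (x i0) ^ a * (x i1) ^ b * gw d x = (∏ i, (x i) ^ (e2 i0 i1 a b i)) * gw d x
    rw [mono2 h]]
  rw [integral_P, prodM2 h]


def e3 {d : ℕ} (i0 i1 j : Fin d) (a b : ℕ) : Fin d → ℕ :=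
  fun i => e2 i0 i1 a b i + (if i = j then 1 else 0)

lemma mono3 {d : ℕ} {i0 i1 : Fin d} (h : i0 ≠ i1) (j : Fin d) (a b : ℕ) (x : Fin d → ℝ) :
    (∏ i, (x i) ^ (e3 i0 i1 j a b i)) = (x i0) ^ a * (x i1) ^ b * x j := by
  have key : ∀ i : Fin d, (x i) ^ (e3 i0 i1 j a b i)
      = (x i) ^ (e2 i0 i1 a b i) * (if i = j then x i else 1) := by
    intro i
    rcases eq_or_ne i j with hj | hj <;> simp [e3, hj, pow_add]
  rw [Finset.prod_congr rfl fun i _ => key i, Finset.prod_mul_distrib, mono2 h,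
    Finset.prod_ite_eq' Finset.univ j (fun i => x i)]
  simp

lemma integrable_mono3 {d : ℕ} {i0 i1 : Fin d} (h : i0 ≠ i1) (j : Fin d) (a b : ℕ) :
    Integrable (fun x : Fin d → ℝ => (x i0) ^ a * (x i1) ^ b * x j * gw d x) :=
  (integrable_P d (e3 i0 i1 j a b)).congr (Eventually.of_forall fun x => by
    show (∏ i, (x i) ^ (e3 i0 i1 j a b i)) * gw d x = (x i0) ^ a * (x i1) ^ b * x j * gw d x
    rw [mono3 h])

lemma prod_three {d : ℕ} {i0 i1 j : Fin d} (h01 : i0 ≠ i1) (hj0 : j ≠ i0) (hj1 : j ≠ i1)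
    (A B C : ℝ) (F : Fin d → ℝ)
    (hF : ∀ i, F i = if i = i0 then A else if i = i1 then B else if i = j then C else 1) :
    ∏ i, F i = A * B * C := by
  have key : ∀ i, F i = (if i = i0 then A else if i = i1 then B else 1)
      * (if i = j then C else 1) := by
    intro i
    rcases eq_or_ne i i0 with h0 | h0 <;> rcases eq_or_ne i i1 with h1 | h1 <;>
      rcases eq_or_ne i j with h2 | h2 <;> simp_all [hF i]
  rw [Finset.prod_congr rfl fun i _ => key i, Finset.prod_mul_distrib,
    prod_two h01 A B _ (fun i => rfl),
    Finset.prod_ite_eq' Finset.univ j (fun _ => C)]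
  simp

lemma integral_mono_j {d : ℕ} {i0 i1 : Fin d} (h : i0 ≠ i1) (j : Fin d) (a b : ℕ)
    (hz0 : M (a + 1) * M b = 0) (hz1 : M a * M (b + 1) = 0) :
    ∫ x : Fin d → ℝ, (x i0) ^ a * (x i1) ^ b * x j * gw d x = 0 := by
  rcases eq_or_ne j i0 with rfl | hj0
  · rw [show (fun x : Fin d → ℝ => (x j) ^ a * (x i1) ^ b * x j * gw d x)
        = fun x => (x j) ^ (a+1) * (x i1) ^ b * gw d x from funext fun x => by ring]
    rw [integral_mono2 h, hz0]
  · rcases eq_or_ne j i1 with rfl | hj1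
    · rw [show (fun x : Fin d → ℝ => (x i0) ^ a * (x j) ^ b * x j * gw d x)
          = fun x => (x i0) ^ a * (x j) ^ (b+1) * gw d x from funext fun x => by ring]
      rw [integral_mono2 h, hz1]
    · rw [show (fun x : Fin d → ℝ => (x i0) ^ a * (x i1) ^ b * x j * gw d x)
          = fun x => (∏ i, (x i) ^ (e3 i0 i1 j a b i)) * gw d x from funext fun x => by
        show _ = (∏ i, (x i) ^ (e3 i0 i1 j a b i)) * gw d x
        rw [mono3 h]]
      rw [integral_P]
      rw [prod_three h hj0 hj1 (M a) (M b) (M 1) _ (fun i => ?_), M_one, mul_zero]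
      rcases eq_or_ne i i0 with h0 | h0 <;> rcases eq_or_ne i i1 with h1 | h1 <;>
        rcases eq_or_ne i j with h2 | h2 <;> simp_all [e3, e2, M_zero]

lemma int4 {d : ℕ} {i0 i1 : Fin d} (h : i0 ≠ i1) (c1 c2 c3 c4 : ℝ)
    (a1 b1 a2 b2 a3 b3 a4 b4 : ℕ) :
    ∫ x : Fin d → ℝ, (c1 * ((x i0) ^ a1 * (x i1) ^ b1) + c2 * ((x i0) ^ a2 * (x i1) ^ b2)
      + c3 * ((x i0) ^ a3 * (x i1) ^ b3) + c4 * ((x i0) ^ a4 * (x i1) ^ b4)) * gw d x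
    = c1 * (M a1 * M b1) + c2 * (M a2 * M b2) + c3 * (M a3 * M b3) + c4 * (M a4 * M b4) := by
  have I : ∀ (a b : ℕ) (c : ℝ),
      Integrable (fun x : Fin d → ℝ => c * ((x i0) ^ a * (x i1) ^ b * gw d x)) :=
    fun a b c => (integrable_mono2 h a b).const_mul c
  rw [show (fun x : Fin d → ℝ => (c1 * ((x i0) ^ a1 * (x i1) ^ b1)
        + c2 * ((x i0) ^ a2 * (x i1) ^ b2) + c3 * ((x i0) ^ a3 * (x i1) ^ b3)
        + c4 * ((x i0) ^ a4 * (x i1) ^ b4)) * gw d x)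
      = fun x => c1 * ((x i0) ^ a1 * (x i1) ^ b1 * gw d x)
        + (c2 * ((x i0) ^ a2 * (x i1) ^ b2 * gw d x)
        + (c3 * ((x i0) ^ a3 * (x i1) ^ b3 * gw d x)
        + c4 * ((x i0) ^ a4 * (x i1) ^ b4 * gw d x))) from funext fun x => by ring]
  have I34 : Integrable (fun x : Fin d → ℝ => c3 * ((x i0) ^ a3 * (x i1) ^ b3 * gw d x)
      + c4 * ((x i0) ^ a4 * (x i1) ^ b4 * gw d x)) := (I a3 b3 c3).add (I a4 b4 c4)
  have I234 : Integrable (fun x : Fin d → ℝ => c2 * ((x i0) ^ a2 * (x i1) ^ b2 * gw d x)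
      + (c3 * ((x i0) ^ a3 * (x i1) ^ b3 * gw d x)
      + c4 * ((x i0) ^ a4 * (x i1) ^ b4 * gw d x))) := (I a2 b2 c2).add I34
  rw [integral_add (I a1 b1 c1) I234]
  rw [integral_add (I a2 b2 c2) I34]
  rw [integral_add (I a3 b3 c3) (I a4 b4 c4),
    integral_const_mul, integral_const_mul, integral_const_mul, integral_const_mul,
    integral_mono2 h, integral_mono2 h, integral_mono2 h, integral_mono2 h]
  ring


lemma int3j {d : ℕ} {i0 i1 : Fin d} (h : i0 ≠ i1) (j : Fin d) (p q r : ℝ) :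
    ∫ x : Fin d → ℝ, (p * ((x i0) ^ 0 * (x i1) ^ 0 * x j * gw d x)
      + q * ((x i0) ^ 0 * (x i1) ^ 2 * x j * gw d x)
      + r * ((x i0) ^ 1 * (x i1) ^ 1 * x j * gw d x)) = 0 := by
  have J1 := (integrable_mono3 h j 0 0).const_mul p
  have J2 := (integrable_mono3 h j 0 2).const_mul q
  have J3 := (integrable_mono3 h j 1 1).const_mul r
  have I12 : Integrable (fun x : Fin d → ℝ => p * ((x i0) ^ 0 * (x i1) ^ 0 * x j * gw d x)
      + q * ((x i0) ^ 0 * (x i1) ^ 2 * x j * gw d x)) := J1.add J2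
  rw [integral_add I12 J3, integral_add J1 J2,
    integral_const_mul, integral_const_mul, integral_const_mul,
    integral_mono_j h j 0 0 (by simp [M_one]) (by simp [M_one]),
    integral_mono_j h j 0 2 (by simp [M_one]) (by simp [M_three]),
    integral_mono_j h j 1 1 (by simp [M_one]) (by simp [M_one])]
  ring

end S10

set_option maxHeartbeats 1000000 in
/-- Explicit optimality witness in the Gaussian case. -/
theorem stmt_10 (d : ℕ) (hd : 2 ≤ d)
    (u : (Fin d → ℝ) → (Fin d → ℝ))
    (hu : u = fun x i =>
      if i = (⟨0, by omega⟩ : Fin d) then 1 - (x ⟨1, by omega⟩) ^ 2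
      else if i = (⟨1, by omega⟩ : Fin d) then x ⟨0, by omega⟩ * x ⟨1, by omega⟩
      else 0) :
    (∀ i, ∫ x, u x i * gw d x = 0) ∧
    (∀ A : Fin d → Fin d → ℝ, (∀ i j, A i j = -A j i) →
      ∫ x, (∑ i, u x i * ∑ j, A i j * x j) * gw d x = 0) ∧
    (∀ i j, ∫ x, asymJ u x i j * gw d x = 0) ∧
    (∫ x, (∑ i, (u x i) ^ 2) * gw d x = 3) ∧
    (∫ x, frob (symJ u x) * gw d x = 3 / 2) ∧
    (∫ x, frob (asymJ u x) * gw d x = 9 / 2) ∧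
    (∫ x, frob (jac u x) * gw d x = 6) := by
  have h0d : 0 < d := by omega
  have h1d : 1 < d := by omega
  obtain ⟨i0, i1, hne, hu'⟩ : ∃ i0 i1 : Fin d, i0 ≠ i1 ∧ ∀ (x : Fin d → ℝ) (i : Fin d),
      u x i = if i = i0 then 1 - (x i1) ^ 2 else if i = i1 then x i0 * x i1 else 0 :=
    ⟨⟨0, h0d⟩, ⟨1, h1d⟩, by simp [Fin.ext_iff], by intro x i; rw [hu]⟩
  have key_jac : ∀ (x : Fin d → ℝ) (i j : Fin d), jac u x i j =
      if i = i0 then (if j = i0 then 0 else if j = i1 then -2 * x i1 else 0)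
      else if i = i1 then (if j = i0 then x i1 else if j = i1 then x i0 else 0)
      else 0 := by
    intro x i j
    rcases eq_or_ne i i0 with h0 | h0
    · have hf : (fun y : Fin d → ℝ => u y i) = fun y => 1 - y i1 * y i1 := by
        funext y
        rw [hu' y i, if_pos h0, pow_two]
      rw [jac, pd, hf, if_pos h0]
      have hD : HasFDerivAt (fun y : Fin d → ℝ => 1 - y i1 * y i1)
          (-(x i1 • ContinuousLinearMap.proj (R := ℝ) (φ := fun _ : Fin d => ℝ) i1
            + x i1 • ContinuousLinearMap.proj (R := ℝ) (φ := fun _ : Fin d => ℝ) i1)) x :=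
        ((hasFDerivAt_apply (𝕜 := ℝ) i1 x).mul (hasFDerivAt_apply (𝕜 := ℝ) i1 x)).const_sub 1
      rw [hD.fderiv]
      simp only [ContinuousLinearMap.neg_apply, ContinuousLinearMap.add_apply,
        ContinuousLinearMap.coe_smul', Pi.smul_apply, ContinuousLinearMap.proj_apply,
        Pi.single_apply, smul_eq_mul]
      rcases eq_or_ne j i0 with hj0 | hj0
      · rw [if_pos hj0]
        have : i1 ≠ j := fun hh => hne ((hj0 ▸ hh).symm)
        simp [this]
      · rcases eq_or_ne j i1 with hj1 | hj1
        · rw [if_neg hj0, if_pos hj1]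
          simp [hj1.symm]
          ring
        · rw [if_neg hj0, if_neg hj1]
          simp [Ne.symm hj1]
    · rcases eq_or_ne i i1 with h1 | h1
      · have hf : (fun y : Fin d → ℝ => u y i) = fun y => y i0 * y i1 := by
          funext y
          rw [hu' y i, if_neg h0, if_pos h1]
        rw [jac, pd, hf, if_neg h0, if_pos h1]
        have hD : HasFDerivAt (fun y : Fin d → ℝ => y i0 * y i1)
            (x i0 • ContinuousLinearMap.proj (R := ℝ) (φ := fun _ : Fin d => ℝ) i1
              + x i1 • ContinuousLinearMap.proj (R := ℝ) (φ := fun _ : Fin d => ℝ) i0) x :=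
          (hasFDerivAt_apply (𝕜 := ℝ) i0 x).mul (hasFDerivAt_apply (𝕜 := ℝ) i1 x)
        rw [hD.fderiv]
        simp only [ContinuousLinearMap.add_apply, ContinuousLinearMap.coe_smul',
          Pi.smul_apply, ContinuousLinearMap.proj_apply, Pi.single_apply, smul_eq_mul]
        rcases eq_or_ne j i0 with hj0 | hj0
        · rw [if_pos hj0]
          have : i1 ≠ j := fun hh => hne ((hj0 ▸ hh).symm)
          simp [this, hj0.symm]
        · rcases eq_or_ne j i1 with hj1 | hj1
          · rw [if_neg hj0, if_pos hj1]
            simp [hj1.symm, Ne.symm hj0]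
          · rw [if_neg hj0, if_neg hj1]
            simp [Ne.symm hj0, Ne.symm hj1]
      · have hf : (fun y : Fin d → ℝ => u y i) = fun _ => (0:ℝ) := by
          funext y
          rw [hu' y i, if_neg h0, if_neg h1]
        rw [jac, pd, hf, if_neg h0, if_neg h1, fderiv_fun_const]
        simp
  refine ⟨?_, ?_, ?_, ?_, ?_, ?_, ?_⟩
  · -- mean zero
    intro i
    rcases eq_or_ne i i0 with h0 | h0
    · rw [show (fun x : Fin d → ℝ => u x i * gw d x)
          = fun x => ((1:ℝ) * ((x i0) ^ 0 * (x i1) ^ 0) + (-1) * ((x i0) ^ 0 * (x i1) ^ 2)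
            + 0 * ((x i0) ^ 0 * (x i1) ^ 0) + 0 * ((x i0) ^ 0 * (x i1) ^ 0)) * gw d x
          from funext fun x => by rw [hu' x i, if_pos h0]; ring]
      rw [S10.int4 hne]
      simp [S10.M_zero, S10.M_two]
    · rcases eq_or_ne i i1 with h1 | h1
      · rw [show (fun x : Fin d → ℝ => u x i * gw d x)
            = fun x => ((1:ℝ) * ((x i0) ^ 1 * (x i1) ^ 1) + 0 * ((x i0) ^ 0 * (x i1) ^ 0)
              + 0 * ((x i0) ^ 0 * (x i1) ^ 0) + 0 * ((x i0) ^ 0 * (x i1) ^ 0)) * gw d x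
            from funext fun x => by rw [hu' x i, if_neg h0, if_pos h1]; ring]
        rw [S10.int4 hne]
        simp [S10.M_one]
      · rw [show (fun x : Fin d → ℝ => u x i * gw d x) = fun _ => (0:ℝ)
            from funext fun x => by rw [hu' x i, if_neg h0, if_neg h1, zero_mul]]
        exact integral_zero _ _
  · -- projection on rotations
    intro A hA
    have hs : ∀ x : Fin d → ℝ, (∑ i, u x i * ∑ j, A i j * x j)
        = (1 - (x i1) ^ 2) * (∑ j, A i0 j * x j) + (x i0 * x i1) * (∑ j, A i1 j * x j) := by
      intro x
      refine S10.sum_two hne _ _ _ fun i => ?_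
      rcases eq_or_ne i i0 with h0 | h0
      · rw [hu' x i, if_pos h0, if_pos h0, h0]
      · rcases eq_or_ne i i1 with h1 | h1
        · rw [hu' x i, if_neg h0, if_pos h1, if_neg h0, if_pos h1, h1]
        · rw [hu' x i, if_neg h0, if_neg h1, if_neg h0, if_neg h1, zero_mul]
    rw [show (fun x : Fin d → ℝ => (∑ i, u x i * ∑ j, A i j * x j) * gw d x)
        = fun x => ∑ j, (A i0 j * ((x i0) ^ 0 * (x i1) ^ 0 * x j * gw d x)
          + (-A i0 j) * ((x i0) ^ 0 * (x i1) ^ 2 * x j * gw d x)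
          + A i1 j * ((x i0) ^ 1 * (x i1) ^ 1 * x j * gw d x)) from funext fun x => by
      rw [hs x, add_mul, Finset.mul_sum, Finset.mul_sum, Finset.sum_mul, Finset.sum_mul,
        ← Finset.sum_add_distrib]
      exact Finset.sum_congr rfl fun j _ => by ring]
    rw [integral_finset_sum _ fun j _ => by
      exact (((S10.integrable_mono3 hne j 0 0).const_mul _).add
        ((S10.integrable_mono3 hne j 0 2).const_mul _)).add
        ((S10.integrable_mono3 hne j 1 1).const_mul _)]
    exact Finset.sum_eq_zero fun j _ => S10.int3j hne j _ _ _
  · -- asym mean zero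
    intro i j
    have alin : ∀ x : Fin d → ℝ, asymJ u x i j =
        (if i = i0 ∧ j = i1 then -(3/2 : ℝ) else if i = i1 ∧ j = i0 then (3/2 : ℝ) else 0)
          * x i1 := by
      intro x
      rw [asymJ, key_jac, key_jac]
      clear hu hu' key_jac
      rcases eq_or_ne i i0 with hI0 | hI0 <;> rcases eq_or_ne j i0 with hJ0 | hJ0 <;>
        rcases eq_or_ne i i1 with hI1 | hI1 <;> rcases eq_or_ne j i1 with hJ1 | hJ1 <;>
        simp_all <;> ring
    rw [show (fun x : Fin d → ℝ => asymJ u x i j * gw d x)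
        = fun x => ((if i = i0 ∧ j = i1 then -(3/2 : ℝ) else if i = i1 ∧ j = i0 then (3/2 : ℝ)
            else 0) * ((x i0) ^ 0 * (x i1) ^ 1) + 0 * ((x i0) ^ 0 * (x i1) ^ 0)
            + 0 * ((x i0) ^ 0 * (x i1) ^ 0) + 0 * ((x i0) ^ 0 * (x i1) ^ 0)) * gw d x
          from funext fun x => by rw [alin x]; ring]
    rw [S10.int4 hne]
    simp [S10.M_one]
  · -- L2 norm
    have hsq : ∀ x : Fin d → ℝ, (∑ i, (u x i) ^ 2)
        = (1 - (x i1) ^ 2) ^ 2 + (x i0 * x i1) ^ 2 := by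
      intro x
      refine S10.sum_two hne _ _ _ fun i => ?_
      rcases eq_or_ne i i0 with h0 | h0
      · rw [hu' x i, if_pos h0, if_pos h0]
      · rcases eq_or_ne i i1 with h1 | h1
        · rw [hu' x i, if_neg h0, if_pos h1, if_neg h0, if_pos h1]
        · rw [hu' x i, if_neg h0, if_neg h1, if_neg h0, if_neg h1]
          norm_num
    rw [show (fun x : Fin d → ℝ => (∑ i, (u x i) ^ 2) * gw d x)
        = fun x => ((1:ℝ) * ((x i0) ^ 0 * (x i1) ^ 0) + (-2) * ((x i0) ^ 0 * (x i1) ^ 2)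
          + 1 * ((x i0) ^ 0 * (x i1) ^ 4) + 1 * ((x i0) ^ 2 * (x i1) ^ 2)) * gw d x
          from funext fun x => by rw [hsq x]; ring]
    rw [S10.int4 hne]
    norm_num [S10.M_zero, S10.M_two, S10.M_four]
  · -- sym part
    have hfr : ∀ x : Fin d → ℝ, frob (symJ u x)
        = ((0:ℝ) + (x i1) ^ 2 / 4) + ((x i1) ^ 2 / 4 + (x i0) ^ 2) := by
      intro x
      refine S10.sum_block hne _ _ _ _ _ fun i j => ?_
      rw [show (symJ u x i j) ^ 2 = ((jac u x i j + jac u x j i) / 2) ^ 2 from by rw [symJ]]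
      rw [key_jac, key_jac]
      clear hu hu' key_jac
      rcases eq_or_ne i i0 with hI0 | hI0 <;> rcases eq_or_ne j i0 with hJ0 | hJ0 <;>
        rcases eq_or_ne i i1 with hI1 | hI1 <;> rcases eq_or_ne j i1 with hJ1 | hJ1 <;>
        simp_all <;> ring
    rw [show (fun x : Fin d → ℝ => frob (symJ u x) * gw d x)
        = fun x => ((1/2 : ℝ) * ((x i0) ^ 0 * (x i1) ^ 2) + 1 * ((x i0) ^ 2 * (x i1) ^ 0)
          + 0 * ((x i0) ^ 0 * (x i1) ^ 0) + 0 * ((x i0) ^ 0 * (x i1) ^ 0)) * gw d x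
          from funext fun x => by rw [hfr x]; ring]
    rw [S10.int4 hne]
    norm_num [S10.M_zero, S10.M_two]
  · -- asym part
    have hfr : ∀ x : Fin d → ℝ, frob (asymJ u x)
        = ((0:ℝ) + 9 * (x i1) ^ 2 / 4) + (9 * (x i1) ^ 2 / 4 + 0) := by
      intro x
      refine S10.sum_block hne _ _ _ _ _ fun i j => ?_
      rw [show (asymJ u x i j) ^ 2 = ((jac u x i j - jac u x j i) / 2) ^ 2 from by rw [asymJ]]
      rw [key_jac, key_jac]
      clear hu hu' key_jac
      rcases eq_or_ne i i0 with hI0 | hI0 <;> rcases eq_or_ne j i0 with hJ0 | hJ0 <;>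
        rcases eq_or_ne i i1 with hI1 | hI1 <;> rcases eq_or_ne j i1 with hJ1 | hJ1 <;>
        simp_all <;> ring
    rw [show (fun x : Fin d → ℝ => frob (asymJ u x) * gw d x)
        = fun x => ((9/2 : ℝ) * ((x i0) ^ 0 * (x i1) ^ 2) + 0 * ((x i0) ^ 0 * (x i1) ^ 0)
          + 0 * ((x i0) ^ 0 * (x i1) ^ 0) + 0 * ((x i0) ^ 0 * (x i1) ^ 0)) * gw d x
          from funext fun x => by rw [hfr x]; ring]
    rw [S10.int4 hne]
    norm_num [S10.M_zero, S10.M_two]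
  · -- full jacobian
    have hfr : ∀ x : Fin d → ℝ, frob (jac u x)
        = ((0:ℝ) + 4 * (x i1) ^ 2) + ((x i1) ^ 2 + (x i0) ^ 2) := by
      intro x
      refine S10.sum_block hne _ _ _ _ _ fun i j => ?_
      rw [key_jac]
      clear hu hu' key_jac
      rcases eq_or_ne i i0 with hI0 | hI0 <;> rcases eq_or_ne j i0 with hJ0 | hJ0 <;>
        rcases eq_or_ne i i1 with hI1 | hI1 <;> rcases eq_or_ne j i1 with hJ1 | hJ1 <;>
        simp_all <;> ring
    rw [show (fun x : Fin d → ℝ => frob (jac u x) * gw d x)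
        = fun x => ((5 : ℝ) * ((x i0) ^ 0 * (x i1) ^ 2) + 1 * ((x i0) ^ 2 * (x i1) ^ 0)
          + 0 * ((x i0) ^ 0 * (x i1) ^ 0) + 0 * ((x i0) ^ 0 * (x i1) ^ 0)) * gw d x
          from funext fun x => by rw [hfr x]; ring]
    rw [S10.int4 hne]
    norm_num [S10.M_zero, S10.M_two]
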